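/- With b := J(s_b) and I₁ : [b, ∞) → [s_b, ∞) the inverse of the restriction of J to [s_b, ∞), the function I₁ is differentiable on (b, ∞), the improper integral ∫_b^∞ (I₁′(x)/I₁(x) − 1/x) dx converges, and its value is log(b/(c1·s_b)); equivalently, −∫_b^∞ (I₁′(x)/I₁(x) − 1/x) dx = log(c1·s_b/b). -/

import Mathlib

open MeasureTheory

/-- The map `J(s; c0, c1) = (c1*s + c0) * ((s+1)/s)^(1/θ)` for real `s`,
using the real power of the positive quantity `(s+1)/s`. -/
noncomputable def Jmap (θ c0 c1 s : ℝ) : ℝ :=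
  (c1 * s + c0) * ((s + 1) / s) ^ (1 / θ)

/-- `s_b = (1−θ)/(2θ) + (1/(2θ))·√(4θ·(c0/c1) + (1−θ)²)`. -/
noncomputable def sB (θ r : ℝ) : ℝ :=
  (1 - θ) / (2 * θ) + 1 / (2 * θ) * Real.sqrt (4 * θ * r + (1 - θ) ^ 2)

open Set Filter Real Topology

noncomputable def Jd (θ c0 c1 s : ℝ) : ℝ :=
  ((s + 1) / s) ^ (1 / θ) * (c1 - (c1 * s + c0) / (θ * s * (s + 1)))

section
variable {θ r c0 c1 : ℝ}

lemma two_theta_sB (hθ : 0 < θ) :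
    2 * θ * sB θ r = (1 - θ) + Real.sqrt (4 * θ * r + (1 - θ) ^ 2) := by
  unfold sB; field_simp

lemma sB_root (hθ : 0 < θ) (hr : 0 < r) :
    θ * (sB θ r)^2 + (θ - 1) * sB θ r - r = 0 := by
  have hD : (0:ℝ) ≤ 4 * θ * r + (1 - θ)^2 := by positivity
  have hs := Real.sq_sqrt hD
  have h2 := two_theta_sB (r := r) hθ
  have h3 : (2*θ)^2 * (θ * (sB θ r)^2 + (θ - 1) * sB θ r - r) = 0 := by
    have : (2*θ)^2 * (θ * (sB θ r)^2 + (θ - 1) * sB θ r - r)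
        = θ * (2*θ*sB θ r)^2 + (θ-1)*(2*θ*sB θ r)*(2*θ) - (2*θ)^2 * r := by ring
    rw [this, h2]; nlinarith [hs]
  have h4 : ((2*θ)^2 : ℝ) ≠ 0 := by positivity
  exact (mul_eq_zero.1 h3).resolve_left h4

lemma sB_half (hθ : 0 < θ) (hr : 0 < r) : 1 - θ < 2 * θ * sB θ r := by
  rw [two_theta_sB hθ]
  have : (0:ℝ) < Real.sqrt (4 * θ * r + (1 - θ)^2) := Real.sqrt_pos.2 (by positivity)
  linarith

lemma sB_pos (hθ : 0 < θ) (hr : 0 < r) : 0 < sB θ r := by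
  have h1 : Real.sqrt ((1-θ)^2) < Real.sqrt (4 * θ * r + (1 - θ)^2) :=
    Real.sqrt_lt_sqrt (by positivity) (by nlinarith)
  rw [Real.sqrt_sq_eq_abs] at h1
  have h2 := two_theta_sB (r := r) hθ
  have h3 : 0 < 2 * θ * sB θ r := by
    rw [h2]; rcases abs_cases (1 - θ) with ⟨h, h'⟩ | ⟨h, h'⟩ <;> rw [h] at h1 <;> linarith
  nlinarith

lemma hasDerivAt_J (hθ : 0 < θ) {s : ℝ} (hs : 0 < s) :
    HasDerivAt (Jmap θ c0 c1) (Jd θ c0 c1 s) s := by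
  have hs1 : 0 < s + 1 := by linarith
  have hu : 0 < ((s : ℝ) + 1) / s := by positivity
  have hder_u : HasDerivAt (fun s : ℝ => (s + 1) / s) (-1 / s ^ 2) s := by
    have h1 : HasDerivAt (fun s : ℝ => s + 1) 1 s := (hasDerivAt_id s).add_const 1
    have := h1.div (hasDerivAt_id s) hs.ne'
    refine this.congr_deriv ?_
    simp only [id]
    field_simp
    ring
  have hpow : HasDerivAt (fun s : ℝ => ((s + 1) / s) ^ (1 / θ))
      ((-1 / s ^ 2) * (1 / θ) * ((s + 1) / s) ^ (1 / θ - 1)) s :=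
    hder_u.rpow_const (Or.inl hu.ne')
  have hlin : HasDerivAt (fun s : ℝ => c1 * s + c0) c1 s := by
    simpa using ((hasDerivAt_id s).const_mul c1).add_const c0
  have h := hlin.mul hpow
  refine h.congr_deriv ?_
  unfold Jd
  rw [Real.rpow_sub hu, Real.rpow_one]
  field_simp
  ring

lemma q_pos (hθ : 0 < θ) (hr : 0 < r) {s : ℝ} (hs : sB θ r < s) :
    0 < θ * s^2 + (θ - 1) * s - r := by
  have h1 := sB_root (r := r) hθ hr
  have h2 := sB_half (r := r) hθ hr
  nlinarith [mul_pos (sub_pos.2 hs) (show 0 < θ * (s + sB θ r) + θ - 1 by nlinarith)]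

lemma Jd_pos (hθ : 0 < θ) (hc1 : 0 < c1) (hc01 : c1 < c0)
    {s : ℝ} (hs : sB θ (c0/c1) < s) : 0 < Jd θ c0 c1 s := by
  have hr : 0 < c0 / c1 := div_pos (by linarith) hc1
  have hs0 : 0 < s := lt_trans (sB_pos hθ hr) hs
  have hs1 : 0 < s + 1 := by linarith
  have hq := q_pos hθ hr hs
  have hc0 : c1 * (c0 / c1) = c0 := by field_simp
  have key : c1 * s + c0 < c1 * (θ * s * (s + 1)) := by nlinarith
  have hden : 0 < θ * s * (s + 1) := by positivity
  have : (c1 * s + c0) / (θ * s * (s + 1)) < c1 := (div_lt_iff₀ hden).2 (by linarith [key])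
  unfold Jd
  have hu : 0 < ((s + 1) / s) ^ (1 / θ) := Real.rpow_pos_of_pos (by positivity) _
  nlinarith

lemma J_pos (hc1 : 0 < c1) (hc0 : 0 < c0) {s : ℝ} (hs : 0 < s) :
    0 < Jmap θ c0 c1 s := by
  unfold Jmap
  have h1 : 0 < c1 * s + c0 := by positivity
  have h2 : 0 < ((s + 1) / s) ^ (1 / θ) := Real.rpow_pos_of_pos (by positivity) _
  positivity

lemma J_sub_pos (hθ : 0 < θ) (hc1 : 0 < c1) (hc0 : 0 < c0) {s : ℝ} (hs : 0 < s) :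
    s * Jd θ c0 c1 s < Jmap θ c0 c1 s := by
  have hs1 : 0 < s + 1 := by linarith
  have key : Jmap θ c0 c1 s - s * Jd θ c0 c1 s
      = ((s + 1) / s) ^ (1 / θ) * (c0 + (c1 * s + c0) / (θ * (s + 1))) := by
    unfold Jmap Jd; field_simp; ring
  have hu : 0 < ((s + 1) / s) ^ (1 / θ) := Real.rpow_pos_of_pos (by positivity) _
  nlinarith [mul_pos hu (show 0 < c0 + (c1 * s + c0) / (θ * (s + 1)) by positivity)]

lemma J_strictMono (hθ : 0 < θ) (hc1 : 0 < c1) (hc01 : c1 < c0) :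
    StrictMonoOn (Jmap θ c0 c1) (Ici (sB θ (c0/c1))) := by
  have hr : 0 < c0 / c1 := div_pos (by linarith) hc1
  have hsb := sB_pos (r := c0/c1) hθ hr
  apply strictMonoOn_of_deriv_pos (convex_Ici _)
  · exact fun s hs => ((hasDerivAt_J hθ (lt_of_lt_of_le hsb hs)).continuousAt).continuousWithinAt
  · intro x hx
    rw [interior_Ici] at hx
    rw [(hasDerivAt_J hθ (lt_trans hsb hx)).deriv]
    exact Jd_pos hθ hc1 hc01 hx

end

/-- With `b := J(s_b)` and `I₁ : [b, ∞) → [s_b, ∞)` the inverse of the restriction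
of `J` to `[s_b, ∞)`: `I₁` is differentiable on `(b, ∞)`, the improper integral
`∫_b^∞ (I₁′(x)/I₁(x) − 1/x) dx` converges, and equals `log(b/(c1·s_b))`. -/
theorem stmt8 (θ c0 c1 : ℝ) (hθ : 0 < θ) (hc1 : 0 < c1) (hc01 : c1 < c0)
    (I1 : ℝ → ℝ)
    (hI1 : ∀ x, Jmap θ c0 c1 (sB θ (c0 / c1)) ≤ x →
      sB θ (c0 / c1) ≤ I1 x ∧ Jmap θ c0 c1 (I1 x) = x) :
    (∀ x, Jmap θ c0 c1 (sB θ (c0 / c1)) < x → DifferentiableAt ℝ I1 x) ∧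
    IntegrableOn (fun x => deriv I1 x / I1 x - 1 / x)
      (Set.Ioi (Jmap θ c0 c1 (sB θ (c0 / c1)))) ∧
    (∫ x in Set.Ioi (Jmap θ c0 c1 (sB θ (c0 / c1))), (deriv I1 x / I1 x - 1 / x))
      = Real.log (Jmap θ c0 c1 (sB θ (c0 / c1)) / (c1 * sB θ (c0 / c1))) := by
  have hc0 : 0 < c0 := by linarith
  have hr : 0 < c0 / c1 := div_pos hc0 hc1
  set sb := sB θ (c0 / c1) with hsb_def
  set b := Jmap θ c0 c1 sb with hb_def
  have hsb : 0 < sb := sB_pos hθ hr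
  have hb : 0 < b := J_pos hc1 hc0 hsb
  have hmono := J_strictMono hθ hc1 hc01
  have hI1b : I1 b = sb := by
    have h := hI1 b le_rfl
    exact hmono.injOn (mem_Ici.2 h.1) self_mem_Ici h.2
  have hgt : ∀ x, b < x → sb < I1 x := by
    intro x hx
    rcases eq_or_lt_of_le (hI1 x hx.le).1 with h | h
    · exfalso
      have := (hI1 x hx.le).2
      rw [← h] at this
      rw [← hb_def] at this
      exact absurd this.symm (ne_of_gt hx)
    · exact h
  have lt1 : ∀ y, b ≤ y → ∀ t, sb ≤ t → Jmap θ c0 c1 t < y → t < I1 y := by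
    intro y hy t ht hJt
    by_contra h
    push_neg at h
    have := hmono.monotoneOn (mem_Ici.2 (hI1 y hy).1) (mem_Ici.2 ht) h
    rw [(hI1 y hy).2] at this
    linarith
  have lt2 : ∀ y, b ≤ y → ∀ t, sb ≤ t → y < Jmap θ c0 c1 t → I1 y < t := by
    intro y hy t ht hJt
    by_contra h
    push_neg at h
    have := hmono.monotoneOn (mem_Ici.2 ht) (mem_Ici.2 (hI1 y hy).1) h
    rw [(hI1 y hy).2] at this
    linarith
  have hcont : ∀ x, b < x → ContinuousAt I1 x := by
    intro x hx
    rw [ContinuousAt]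
    apply tendsto_order.2
    constructor
    · intro a ha
      rcases lt_or_ge a sb with h | h
      · filter_upwards [Ioi_mem_nhds hx] with y hy
        exact lt_of_lt_of_le h (hI1 y (le_of_lt hy)).1
      · have hJa : Jmap θ c0 c1 a < x := by
          rw [← (hI1 x hx.le).2]
          exact hmono (mem_Ici.2 h) (mem_Ici.2 (hI1 x hx.le).1) ha
        filter_upwards [Ioi_mem_nhds hJa, Ioi_mem_nhds hx] with y h1 h2
        exact lt1 y h2.le a h h1
    · intro a ha
      have hsba : sb ≤ a := le_of_lt (lt_of_le_of_lt (hI1 x hx.le).1 ha)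
      have hJa : x < Jmap θ c0 c1 a := by
        rw [← (hI1 x hx.le).2]
        exact hmono (mem_Ici.2 (hI1 x hx.le).1) (mem_Ici.2 hsba) ha
      filter_upwards [Iio_mem_nhds hJa, Ioi_mem_nhds hx] with y h1 h2
      exact lt2 y h2.le a hsba h1
  have hderivI : ∀ x, b < x → HasDerivAt I1 (Jd θ c0 c1 (I1 x))⁻¹ x := by
    intro x hx
    have hgtx := hgt x hx
    have hJd := Jd_pos hθ hc1 hc01 hgtx
    exact HasDerivAt.of_local_left_inverse (hcont x hx)
      (hasDerivAt_J hθ (lt_trans hsb hgtx)) hJd.ne'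
      (by filter_upwards [Ioi_mem_nhds hx] with y hy; exact (hI1 y hy.le).2)
  set F := fun x : ℝ => Real.log (I1 x) - Real.log x with hF_def
  have hF : ∀ x ∈ Ioi b, HasDerivAt F (deriv I1 x / I1 x - 1 / x) x := by
    intro x hx
    rw [mem_Ioi] at hx
    have hI1x : 0 < I1 x := lt_trans hsb (hgt x hx)
    have h1 := (hderivI x hx).log hI1x.ne'
    have h2 := Real.hasDerivAt_log (ne_of_gt (lt_trans hb hx))
    rw [(hderivI x hx).deriv]
    refine (h1.sub h2).congr_deriv ?_
    rw [one_div]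
  have hnonneg : ∀ x ∈ Ioi b, 0 ≤ deriv I1 x / I1 x - 1 / x := by
    intro x hx
    rw [mem_Ioi] at hx
    have hgtx := hgt x hx
    have hI1x : 0 < I1 x := lt_trans hsb hgtx
    have hs0 : 0 < I1 x := hI1x
    have hJd := Jd_pos hθ hc1 hc01 hgtx
    have hx0 : 0 < x := lt_trans hb hx
    have hxeq : Jmap θ c0 c1 (I1 x) = x := (hI1 x hx.le).2
    have hsub := J_sub_pos hθ hc1 hc0 hs0 (c1 := c1) (c0 := c0)
    rw [(hderivI x hx).deriv]
    rw [sub_nonneg, div_le_div_iff₀ hx0 hI1x, one_mul]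
    have h5 : Jd θ c0 c1 (I1 x) * I1 x ≤ Jmap θ c0 c1 (I1 x) := by nlinarith
    rw [hxeq] at h5
    calc I1 x = (Jd θ c0 c1 (I1 x))⁻¹ * (Jd θ c0 c1 (I1 x) * I1 x) := by
          rw [← mul_assoc, inv_mul_cancel₀ hJd.ne', one_mul]
      _ ≤ (Jd θ c0 c1 (I1 x))⁻¹ * x :=
          mul_le_mul_of_nonneg_left h5 (le_of_lt (inv_pos.2 hJd))
  have htop : Tendsto I1 atTop atTop := by
    rw [tendsto_atTop]
    intro M
    have hm : sb ≤ max M sb := le_max_right _ _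
    filter_upwards [eventually_gt_atTop (max b (Jmap θ c0 c1 (max M sb)))] with x hx
    have hx1 : b < x := lt_of_le_of_lt (le_max_left _ _) hx
    have hx2 : Jmap θ c0 c1 (max M sb) < x := lt_of_le_of_lt (le_max_right _ _) hx
    exact le_of_lt (lt_of_le_of_lt (le_max_left M sb) (lt1 x hx1.le _ hm hx2))
  set G := fun s : ℝ => Real.log s - Real.log (Jmap θ c0 c1 s) with hG_def
  have hGlim : Tendsto G atTop (𝓝 (-Real.log c1)) := by
    have hEq : G =ᶠ[atTop]
        (fun s => -Real.log (c1 + c0 / s) - 1 / θ * Real.log ((s + 1) / s)) := by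
      filter_upwards [eventually_gt_atTop 0] with s hs
      have hs1 : 0 < s + 1 := by linarith
      have hu : 0 < (s + 1) / s := by positivity
      have hcs : 0 < c1 * s + c0 := by positivity
      simp only [hG_def, Jmap]
      rw [Real.log_mul hcs.ne' (Real.rpow_pos_of_pos hu _).ne', Real.log_rpow hu]
      have hl : Real.log (c1 * s + c0) = Real.log (c1 + c0 / s) + Real.log s := by
        rw [← Real.log_mul (ne_of_gt (by positivity : (0:ℝ) < c1 + c0 / s)) hs.ne']
        congr 1
        field_simp
      rw [hl]
      ring
    have h0 : Tendsto (fun s : ℝ => c0 / s) atTop (𝓝 0) :=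
      Tendsto.div_atTop (tendsto_const_nhds (x := c0)) tendsto_id
    have h1 : Tendsto (fun s : ℝ => c1 + c0 / s) atTop (𝓝 c1) := by
      simpa using tendsto_const_nhds.add h0
    have h2 : Tendsto (fun s : ℝ => (s + 1) / s) atTop (𝓝 1) := by
      have he : (fun s : ℝ => 1 + 1 / s) =ᶠ[atTop] fun s : ℝ => (s + 1) / s := by
        filter_upwards [eventually_gt_atTop 0] with s hs
        field_simp
      refine Tendsto.congr' he ?_
      have h0' : Tendsto (fun s : ℝ => 1 / s) atTop (𝓝 0) :=
        Tendsto.div_atTop (tendsto_const_nhds (x := (1:ℝ))) tendsto_id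
      simpa using tendsto_const_nhds.add h0' 
    have h3 := (((Real.continuousAt_log hc1.ne').tendsto.comp h1).neg).sub
      ((((Real.continuousAt_log one_ne_zero).tendsto.comp h2)).const_mul (1 / θ))
    rw [Real.log_one, mul_zero, sub_zero] at h3
    exact h3.congr' hEq.symm
  have hFlim : Tendsto F atTop (𝓝 (-Real.log c1)) := by
    have he : G ∘ I1 =ᶠ[atTop] F := by
      filter_upwards [eventually_ge_atTop b] with x hx
      simp only [hF_def, hG_def, Function.comp]
      rw [(hI1 x hx).2]
    exact (hGlim.comp htop).congr' he
  have hcontb : ContinuousWithinAt I1 (Ici b) b := by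
    rw [ContinuousWithinAt, hI1b]
    apply tendsto_order.2
    constructor
    · intro a ha
      exact eventually_nhdsWithin_of_forall fun y hy => lt_of_lt_of_le ha (hI1 y hy).1
    · intro a ha
      have hJa : b < Jmap θ c0 c1 a := hmono self_mem_Ici (mem_Ici.2 ha.le) ha
      filter_upwards [nhdsWithin_le_nhds (Iio_mem_nhds hJa), self_mem_nhdsWithin] with y h1 h2
      exact lt2 y h2 a ha.le h1
  have hcontF : ContinuousWithinAt F (Ici b) b := by
    apply ContinuousWithinAt.sub
    · exact (Real.continuousAt_log (by rw [hI1b]; exact hsb.ne')).comp_continuousWithinAt hcontb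
    · exact (Real.continuousAt_log hb.ne').continuousWithinAt
  have hint : IntegrableOn (fun x => deriv I1 x / I1 x - 1 / x) (Ioi b) :=
    integrableOn_Ioi_deriv_of_nonneg hcontF hF hnonneg hFlim
  refine ⟨fun x hx => (hderivI x hx).differentiableAt, hint, ?_⟩
  rw [integral_Ioi_of_hasDerivAt_of_tendsto hcontF hF hint hFlim]
  rw [Real.log_div hb.ne' (by positivity), Real.log_mul hc1.ne' hsb.ne']
  simp only [hF_def, hI1b]
  ring
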